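/- A language over a one-letter alphabet is regular if and only if it is semilinear. Precisely: let L be a language over a one-letter alphabet (e.g. the type Unit), and let S = { |w| : w ∈ L } ⊆ ℕ be its set of word lengths. Then L is regular (accepted by some deterministic finite automaton with a finite state type) if and only if S is a semilinear subset of ℕ. -/

import Mathlib

/-- A language is regular if it is accepted by some deterministic finite
automaton whose state type is finite. -/
def IsRegularLang {α : Type} (L : Language α) : Prop :=
  ∃ (σ : Type) (_ : Fintype σ) (M : DFA α σ), M.accepts = L

/-- A subset `S ⊆ ℕ` is linear if
`S = { p + a₁p₁ + ⋯ + aₖpₖ : a₁, …, aₖ ∈ ℕ }` for some fixed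
`p, p₁, …, pₖ ∈ ℕ`. -/
def IsLinearNatSet (S : Set ℕ) : Prop :=
  ∃ (p : ℕ) (k : ℕ) (ps : Fin k → ℕ),
    S = {m | ∃ a : Fin k → ℕ, m = p + ∑ i, a i * ps i}

/-- A subset of `ℕ` is semilinear if it is a finite union of linear subsets. -/
def IsSemilinearNatSet (S : Set ℕ) : Prop :=
  ∃ (n : ℕ) (T : Fin n → Set ℕ), (∀ i, IsLinearNatSet (T i)) ∧ S = ⋃ i, T i

/-- A set closed under adding `y > 0` is eventually periodic with period `y`. -/
lemma ep_of_closed {S : Set ℕ} {y : ℕ} (hy : 0 < y) (hS : ∀ n ∈ S, n + y ∈ S) :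
    ∃ N, ∀ n, N ≤ n → (n ∈ S ↔ n + y ∈ S) := by
  classical
  have add_mul_mem : ∀ k, ∀ n ∈ S, n + k * y ∈ S := by
    intro k
    induction k with
    | zero => simpa using fun n h => h
    | succ k ih =>
      intro n hn
      have := hS _ (ih n hn)
      have e : n + (k + 1) * y = n + k * y + y := by ring
      rwa [e]
  refine ⟨(Finset.range y).sup (fun r => sInf {m | m ∈ S ∧ m % y = r}), fun n hn => ?_⟩
  constructor
  · exact fun h => hS n h
  · intro h
    set r := n % y with hr
    have hne : (n + y) ∈ {m | m ∈ S ∧ m % y = r} := ⟨h, by simp [hr, Nat.add_mod_right]⟩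
    have hc : sInf {m | m ∈ S ∧ m % y = r} ∈ {m | m ∈ S ∧ m % y = r} :=
      Nat.sInf_mem ⟨_, hne⟩
    set c := sInf {m | m ∈ S ∧ m % y = r} with hcdef
    have hcn : c ≤ n := by
      refine le_trans (le_trans ?_ (Finset.le_sup (f := fun r => sInf {m | m ∈ S ∧ m % y = r})
        (Finset.mem_range.2 (Nat.mod_lt n hy)))) hn
      exact le_of_eq rfl
    have hmod : c % y = n % y := hc.2
    have hdvd : y ∣ n - c := (Nat.modEq_iff_dvd' hcn).1 hmod
    obtain ⟨t, ht⟩ := hdvd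
    have : n = c + t * y := by rw [mul_comm] at ht; omega
    rw [this]
    exact add_mul_mem t c hc.1

lemma ep_iterate {S : Set ℕ} {N d : ℕ} (h : ∀ n, N ≤ n → (n ∈ S ↔ n + d ∈ S)) :
    ∀ k n, N ≤ n → (n ∈ S ↔ n + k * d ∈ S) := by
  intro k
  induction k with
  | zero => simp
  | succ k ih =>
    intro n hn
    have e : n + (k + 1) * d = n + k * d + d := by ring
    rw [ih n hn, e]
    exact h _ (by omega)

lemma ep_of_linear {S : Set ℕ} (h : IsLinearNatSet S) :
    ∃ N d, 0 < d ∧ ∀ n, N ≤ n → (n ∈ S ↔ n + d ∈ S) := by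
  classical
  obtain ⟨p, k, ps, rfl⟩ := h
  by_cases hps : ∃ i, 0 < ps i
  · obtain ⟨i0, hi0⟩ := hps
    have closed : ∀ n ∈ {m | ∃ a : Fin k → ℕ, m = p + ∑ i, a i * ps i},
        n + ps i0 ∈ {m | ∃ a : Fin k → ℕ, m = p + ∑ i, a i * ps i} := by
      rintro n ⟨a, rfl⟩
      refine ⟨fun i => a i + if i = i0 then 1 else 0, ?_⟩
      have : ∑ i, (a i + if i = i0 then 1 else 0) * ps i
          = ∑ i, a i * ps i + ∑ i, (if i = i0 then ps i else 0) := by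
        rw [← Finset.sum_add_distrib]
        congr 1; ext i
        by_cases h : i = i0 <;> simp [h] <;> ring
      rw [this, Finset.sum_ite_eq' Finset.univ i0 ps]
      simp [add_assoc]
    obtain ⟨N, hN⟩ := ep_of_closed hi0 closed
    exact ⟨N, ps i0, hi0, hN⟩
  · push_neg at hps
    refine ⟨p + 1, 1, one_pos, fun n hn => ?_⟩
    have hsingle : ∀ m, m ∈ {m | ∃ a : Fin k → ℕ, m = p + ∑ i, a i * ps i} → m = p := by
      rintro m ⟨a, rfl⟩
      have : ∀ i ∈ Finset.univ, a i * ps i = 0 := by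
        intro i _; simp [Nat.le_zero.mp (hps i)]
      rw [Finset.sum_eq_zero this]; ring
    constructor
    · intro hm; exact absurd (hsingle n hm) (by omega)
    · intro hm; exact absurd (hsingle _ hm) (by omega)

lemma ep_of_semilinear {S : Set ℕ} (h : IsSemilinearNatSet S) :
    ∃ N d, 0 < d ∧ ∀ n, N ≤ n → (n ∈ S ↔ n + d ∈ S) := by
  obtain ⟨n, T, hT, rfl⟩ := h
  choose N d hd hep using fun i => ep_of_linear (hT i)
  refine ⟨Finset.univ.sup N, ∏ i, d i, Finset.prod_pos (fun i _ => hd i), fun m hm => ?_⟩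
  have key : ∀ i, (m ∈ T i ↔ m + ∏ j, d j ∈ T i) := by
    intro i
    have hNi : N i ≤ m := le_trans (Finset.le_sup (Finset.mem_univ i)) hm
    have hdvd : d i ∣ ∏ j, d j := Finset.dvd_prod_of_mem d (Finset.mem_univ i)
    obtain ⟨c, hc⟩ := hdvd
    rw [hc, mul_comm]
    exact ep_iterate (hep i) c m hNi
  simp only [Set.mem_iUnion]
  exact exists_congr fun i => key i

lemma semilinear_of_ep {S : Set ℕ} {N d : ℕ} (hd : 0 < d)
    (h : ∀ n, N ≤ n → (n ∈ S ↔ n + d ∈ S)) : IsSemilinearNatSet S := by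
  classical
  rcases Set.eq_empty_or_nonempty S with rfl | ⟨s0, hs0⟩
  · exact ⟨0, Fin.elim0, fun i => i.elim0, by simp⟩
  refine ⟨N + d, fun i => if (i : ℕ) ∈ S then
      (if (i : ℕ) < N then {(i : ℕ)}
       else {m | ∃ a : Fin 1 → ℕ, m = (i : ℕ) + ∑ j, a j * d}) else {s0}, ?_, ?_⟩
  · intro i
    by_cases h1 : (i : ℕ) ∈ S
    · by_cases h2 : (i : ℕ) < N
      · simp only [h1, h2, if_true]
        exact ⟨(i : ℕ), 0, Fin.elim0, by ext m; simp⟩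
      · simp only [h1, h2, if_true, if_false]
        exact ⟨(i : ℕ), 1, fun _ => d, rfl⟩
    · simp only [h1, if_false]
      exact ⟨s0, 0, Fin.elim0, by ext m; simp⟩
  · ext m
    simp only [Set.mem_iUnion]
    constructor
    · intro hm
      by_cases hmlt : m < N + d
      · refine ⟨⟨m, hmlt⟩, ?_⟩
        by_cases h2 : m < N
        · simp [hm, h2]
        · simp only [hm, h2, if_true, if_false]
          exact ⟨fun _ => 0, by simp⟩
      · set r := N + (m - N) % d with hr
        set q := (m - N) / d with hq
        have hrlt : r < N + d := by
          have := Nat.mod_lt (m - N) hd; omega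
        have hmeq : m = r + q * d := by
          rw [hr, hq, mul_comm ((m - N) / d) d]
          have := Nat.mod_add_div (m - N) d
          omega
        have hrS : r ∈ S := by
          have := ep_iterate h q r (by omega)
          rw [this, ← hmeq]; exact hm
        refine ⟨⟨r, hrlt⟩, ?_⟩
        show m ∈ (if r ∈ S then (if r < N then {r}
          else {m | ∃ a : Fin 1 → ℕ, m = r + ∑ j, a j * d}) else {s0})
        rw [if_pos hrS, if_neg (show ¬ r < N by omega)]
        exact ⟨fun _ => q, by simpa using hmeq⟩
    · rintro ⟨i, hi⟩
      by_cases h1 : (i : ℕ) ∈ S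
      · by_cases h2 : (i : ℕ) < N
        · simp only [h1, h2, if_true] at hi
          simpa [Set.mem_singleton_iff.mp hi] using h1
        · simp only [h1, h2, if_true, if_false] at hi
          obtain ⟨a, ha⟩ := hi
          rw [show m = (i : ℕ) + a 0 * d by simpa using ha]
          exact (ep_iterate h (a 0) (i : ℕ) (by omega)).1 h1
      · simp only [h1, if_false] at hi
        rwa [Set.mem_singleton_iff.mp hi]

lemma unit_list_eq {w v : List Unit} (h : w.length = v.length) : w = v :=
  List.ext_getElem h (fun _ _ _ => rfl)

lemma mem_iff_length {L : Language Unit} {w : List Unit} :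
    w ∈ L ↔ w.length ∈ List.length '' (L : Set (List Unit)) := by
  constructor
  · exact fun h => ⟨w, h, rfl⟩
  · rintro ⟨v, hv, hlen⟩
    rwa [unit_list_eq hlen.symm]

lemma succ_mod (x d : ℕ) : (x + 1) % d = (x % d + 1) % d := by
  conv_lhs => rw [show x + 1 = x % d + 1 + d * (x / d) by
    have := Nat.mod_add_div x d; omega]
  rw [Nat.add_mul_mod_self_left]

lemma regular_of_ep {L : Language Unit} {N d : ℕ} (hd : 0 < d)
    (h : ∀ n, N ≤ n → (n ∈ (List.length '' (L : Set (List Unit)) : Set ℕ) ↔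
      n + d ∈ (List.length '' (L : Set (List Unit)) : Set ℕ))) : IsRegularLang L := by
  classical
  set S : Set ℕ := List.length '' (L : Set (List Unit)) with hSdef
  -- state value function
  set s : ℕ → ℕ := fun n => if n < N + d then n else N + (n - N) % d with hs
  have hslt : ∀ n, s n < N + d := by
    intro n
    simp only [hs]
    split
    · assumption
    · have := Nat.mod_lt (n - N) hd; omega
  have hs_small : ∀ n, n < N + d → s n = n := fun n hn => if_pos hn
  have hs_big : ∀ n, ¬ n < N + d → s n = N + (n - N) % d := fun n hn => if_neg hn
  -- the key dynamics lemma
  have hstep : ∀ n, s (s n + 1) = s (n + 1) := by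
    intro n
    by_cases hn : n < N + d
    · rw [hs_small n hn]
    · rw [hs_big n hn]
      set r := (n - N) % d with hr
      have hrd : r < d := Nat.mod_lt _ hd
      have hsub : n + 1 - N = (n - N) + 1 := by omega
      by_cases hcase : r + 1 < d
      · rw [hs_small _ (by omega), hs_big (n + 1) (by omega), hsub, succ_mod, ← hr,
          Nat.mod_eq_of_lt (by omega)]
        omega
      · -- r + 1 = d
        have hrd1 : r + 1 = d := by omega
        rw [hs_big (N + r + 1) (by omega), hs_big (n + 1) (by omega), hsub, succ_mod, ← hr,
          hrd1, Nat.mod_self, show N + r + 1 - N = d by omega, Nat.mod_self]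
  -- membership only depends on the state
  have hmem : ∀ n, n ∈ S ↔ s n ∈ S := by
    intro n
    by_cases hn : n < N + d
    · rw [hs_small n hn]
    · rw [hs_big n hn]
      have hmeq : n = (N + (n - N) % d) + ((n - N) / d) * d := by
        rw [mul_comm]
        have := Nat.mod_add_div (n - N) d
        omega
      constructor
      · intro hnS
        exact (ep_iterate h ((n - N) / d) _ (by omega)).2 (by rwa [← hmeq])
      · intro hrS
        rw [show n = (N + (n - N) % d) + ((n - N) / d) * d from hmeq]
        exact (ep_iterate h ((n - N) / d) _ (by omega)).1 hrS
  -- the DFA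
  have hpos : 0 < N + d := by omega
  refine ⟨Fin (N + d), Fin.fintype _,
    { step := fun q _ => ⟨s (q.val + 1), hslt _⟩
      start := ⟨s 0, hslt 0⟩
      accept := {q : Fin (N + d) | (q : ℕ) ∈ S} }, ?_⟩
  set M : DFA Unit (Fin (N + d)) :=
    { step := fun q _ => ⟨s (q.val + 1), hslt _⟩
      start := ⟨s 0, hslt 0⟩
      accept := {q : Fin (N + d) | (q : ℕ) ∈ S} } with hM
  have heval : ∀ n, M.eval (List.replicate n ()) = ⟨s n, hslt n⟩ := by
    intro n
    induction n with
    | zero => rfl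
    | succ n ih =>
      rw [List.replicate_succ', DFA.eval_append_singleton, ih]
      exact Fin.ext (hstep n)
  ext w
  rw [DFA.mem_accepts]
  have hw : w = List.replicate w.length () := unit_list_eq (by simp)
  constructor
  · intro hacc
    rw [hw] at hacc ⊢
    rw [heval] at hacc
    have : s w.length ∈ S := hacc
    rw [mem_iff_length, ← hSdef]
    simpa using (hmem (List.replicate w.length ()).length).2 (by simpa using this)
  · intro hLw
    have h1 : w.length ∈ S := mem_iff_length.mp hLw
    rw [hw, heval]
    exact (hmem w.length).1 h1

lemma ep_of_regular {L : Language Unit} (h : IsRegularLang L) :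
    ∃ N d, 0 < d ∧ ∀ n, N ≤ n →
      ((n ∈ (List.length '' (L : Set (List Unit)) : Set ℕ)) ↔
        (n + d ∈ (List.length '' (L : Set (List Unit)) : Set ℕ))) := by
  obtain ⟨σ, hfin, M, hM⟩ := h
  set f : ℕ → σ := fun n => M.eval (List.replicate n ()) with hf
  have hstep : ∀ n, f (n + 1) = M.step (f n) () := by
    intro n
    simp only [hf]
    rw [List.replicate_succ']
    exact DFA.evalFrom_append_singleton _ _ _ _
  have : ¬ Function.Injective f := by
    intro hinj
    exact (Finite.of_injective f hinj).false
  rw [Function.not_injective_iff] at this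
  obtain ⟨i, j, hfij, hij⟩ := this
  wlog hlt : i < j generalizing i j
  · exact this j i hfij.symm hij.symm (by omega)
  refine ⟨i, j - i, by omega, fun n hn => ?_⟩
  have hper : ∀ m, f (i + m + (j - i)) = f (i + m) := by
    intro m
    induction m with
    | zero =>
      simp only [Nat.add_zero]
      rw [show i + (j - i) = j by omega]
      exact hfij.symm
    | succ m ih =>
      rw [show i + (m + 1) + (j - i) = (i + m + (j - i)) + 1 by omega, hstep, ih,
        show i + (m + 1) = (i + m) + 1 by omega, hstep]
  have key : f (n + (j - i)) = f n := by
    have := hper (n - i)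
    rwa [show i + (n - i) + (j - i) = n + (j - i) by omega,
      show i + (n - i) = n by omega] at this
  have hmemf : ∀ m, (m ∈ (List.length '' (L : Set (List Unit)) : Set ℕ)) ↔ f m ∈ M.accept := by
    intro m
    constructor
    · rintro ⟨v, hv, hlen⟩
      rw [← hM] at hv
      rw [unit_list_eq (show v.length = (List.replicate m ()).length by simp [hlen])] at hv
      exact hv
    · intro hacc
      exact ⟨List.replicate m (), by rw [← hM]; exact hacc, by simp⟩
  rw [hmemf, hmemf, key]

/-- A language over a one-letter alphabet is regular if and only if its set of
word lengths is a semilinear subset of `ℕ`. -/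
theorem regular_iff_semilinear_of_oneLetter (L : Language Unit) :
    IsRegularLang L ↔ IsSemilinearNatSet (List.length '' L) := by
  constructor
  · intro h
    obtain ⟨N, d, hd, hep⟩ := ep_of_regular h
    exact semilinear_of_ep hd hep
  · intro h
    obtain ⟨N, d, hd, hep⟩ := ep_of_semilinear h
    exact regular_of_ep hd hep
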